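/- Change of variables for length ODEs: let V be a real vector space (e.g. ℝ^d), h : V → ℕ → V, and let ℓ : ℕ → ℕ be the binary length with the convention ℓ(0) = 1 and ℓ(x) = ⌊log₂ x⌋ + 1 for x ≥ 1. Suppose f : ℕ → V satisfies the length ODE f(x+1) = f(x) + (ℓ(x+1) − ℓ(x)) • h(f(x), x) for all x, and suppose F : ℕ → V satisfies F(1) = f(0) and F(t+1) = F(t) + h(F(t), 2^t − 1) for all t ≥ 1. Then f(x) = F(ℓ(x)) for every x ∈ ℕ. -/
import Mathlib


/-- Change of variables for length ODEs: let `L` be the binary length function with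
`L 0 = 1` and `L x = ⌊log₂ x⌋ + 1` for `x ≥ 1`. If `f` satisfies the length ODE
`f(x+1) = f(x) + (L(x+1) - L(x)) • h(f(x), x)` and `F` satisfies `F(1) = f(0)` and
`F(t+1) = F(t) + h(F(t), 2^t - 1)` for `t ≥ 1`, then `f(x) = F(L(x))` for all `x`. -/
theorem length_ode_change_of_variables {V : Type*} [AddCommGroup V] [Module ℝ V]
    (h : V → ℕ → V) (L : ℕ → ℕ)
    (hL0 : L 0 = 1) (hL : ∀ x, 1 ≤ x → L x = Nat.log 2 x + 1)
    (f F : ℕ → V)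
    (hf : ∀ x, f (x + 1) = f x + (L (x + 1) - L x) • h (f x) x)
    (hF1 : F 1 = f 0)
    (hF : ∀ t, 1 ≤ t → F (t + 1) = F t + h (F t) (2 ^ t - 1)) :
    ∀ x, f x = F (L x) := by
  intro x
  induction x with
  | zero => rw [hL0, hF1]
  | succ x ih =>
    rcases Nat.eq_zero_or_pos x with rfl | hx
    · have hL1 : L 1 = 1 := by rw [hL 1 le_rfl]; simp
      rw [hf 0, hL1, hL0, hF1]
      simp
    · set t := Nat.log 2 (x + 1) with ht
      have hLx1 : L (x + 1) = t + 1 := hL (x + 1) (by omega)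
      by_cases hpow : x + 1 = 2 ^ t
      · -- x + 1 is a power of 2
        have ht1 : 1 ≤ t := by
          by_contra hc
          interval_cases t
          · omega
        have hlogx : Nat.log 2 x = t - 1 := by
          apply Nat.log_eq_of_pow_le_of_lt_pow
          · have : 2 ^ (t - 1) + 2 ^ (t - 1) = 2 ^ t := by
              rw [← two_mul, ← pow_succ']
              congr 1
              omega
            have h1 : 1 ≤ 2 ^ (t - 1) := Nat.one_le_two_pow
            omega
          · have : t - 1 + 1 = t := by omega
            rw [this]
            omega
        have hLx : L x = t := by rw [hL x hx, hlogx]; omega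
        have hx2 : x = 2 ^ t - 1 := by omega
        rw [hf x, hLx1, hLx, ih, hLx, hF t ht1, ← hx2]
        simp
      · -- not a power of 2: L (x+1) = L x
        have h2t : 2 ^ t ≤ x + 1 := Nat.pow_log_le_self 2 (by omega)
        have hlt : x + 1 < 2 ^ (t + 1) := Nat.lt_pow_succ_log_self (by norm_num) _
        have hlogx : Nat.log 2 x = t :=
          Nat.log_eq_of_pow_le_of_lt_pow (by omega) (by omega)
        have hLx : L x = t + 1 := by rw [hL x hx, hlogx]
        rw [hf x, hLx1, hLx, ih, hLx]
        simp
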